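/- Let p₁ ≤ p₂ be primes and N = p₁·p₂. Then S(N) = p₂ − p₁. -/

import Mathlib

/-- `μ(k)`: the least positive integer `m` such that `gcd(m·k − 1, N) = 1`. -/
noncomputable def mu (N k : ℤ) : ℕ :=
  sInf {m : ℕ | 0 < m ∧ Int.gcd ((m : ℤ) * k - 1) N = 1}

lemma mu_eq_one {N k : ℤ} (h : Int.gcd (k - 1) N = 1) : mu N k = 1 := by
  have h1 : (1 : ℕ) ∈ {m : ℕ | 0 < m ∧ Int.gcd ((m : ℤ) * k - 1) N = 1} := by
    simp [h]
  have := Nat.sInf_le h1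
  have hmem := Nat.sInf_mem ⟨1, h1⟩
  have := hmem.1
  unfold mu
  omega

lemma mu_eq_two {N k : ℤ} (h1 : Int.gcd (k - 1) N ≠ 1)
    (h2 : Int.gcd (2 * k - 1) N = 1) : mu N k = 2 := by
  set s := {m : ℕ | 0 < m ∧ Int.gcd ((m : ℤ) * k - 1) N = 1} with hs
  have h2' : (2 : ℕ) ∈ s := by
    constructor
    · norm_num
    · push_cast; exact h2
  have hle := Nat.sInf_le h2'
  have hmem := Nat.sInf_mem (⟨2, h2'⟩ : s.Nonempty)
  have hpos := hmem.1
  have hne1 : sInf s ≠ 1 := by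
    intro he
    rw [he] at hmem
    have := hmem.2
    simp at this
    exact h1 this
  unfold mu
  rw [← hs]
  omega

lemma gcd_one_iff {p q : ℕ} (hp : p.Prime) (hq : q.Prime) (x : ℤ) :
    Int.gcd x ((p : ℤ) * (q : ℤ)) = 1 ↔ ¬(p : ℤ) ∣ x ∧ ¬(q : ℤ) ∣ x := by
  rw [← Int.isCoprime_iff_gcd_eq_one, IsCoprime.mul_right_iff]
  rw [isCoprime_comm (x := x), isCoprime_comm (x := x) (y := (q:ℤ))]
  rw [Prime.coprime_iff_not_dvd (Nat.prime_iff_prime_int.mp hp),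
    Prime.coprime_iff_not_dvd (Nat.prime_iff_prime_int.mp hq)]

/-- `S(N) = Σ μ(k)·(1 − gcd(k,N)²/N)`, the sum over all `k` with `1 < k < N`,
`gcd(k, N) > 1` and `gcd(k, N)² < N`. -/
noncomputable def weberS (N : ℤ) : ℚ :=
  ∑ k ∈ Finset.Ico (2 : ℤ) N,
    if 1 < Int.gcd k N ∧ ((Int.gcd k N : ℤ)) ^ 2 < N then
      (mu N k : ℚ) * (1 - (Int.gcd k N : ℚ) ^ 2 / (N : ℚ))
    else 0

/-- For `N = p₁·p₂` a product of two primes `p₁ ≤ p₂`, `S(N) = p₂ − p₁`. -/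
theorem weberS_two_primes (p₁ p₂ : ℕ) (h₁ : p₁.Prime) (h₂ : p₂.Prime)
    (hle : p₁ ≤ p₂) :
    weberS ((p₁ : ℤ) * (p₂ : ℤ)) = (p₂ : ℚ) - (p₁ : ℚ) := by
  have hp1 := h₁.two_le
  have hp2 := h₂.two_le
  rcases eq_or_lt_of_le hle with heq | hlt
  · -- equal primes: sum is empty
    subst heq
    unfold weberS
    rw [Finset.sum_eq_zero]
    · simp
    intro k hk
    rw [if_neg]
    rintro ⟨hg1, hg2⟩
    set d := Int.gcd k ((p₁:ℤ) * (p₁:ℤ)) with hd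
    have hdvd : (d : ℤ) ∣ (p₁:ℤ) * (p₁:ℤ) := Int.gcd_dvd_right _ _
    have hdvd' : d ∣ p₁ * p₁ := by exact_mod_cast hdvd
    have hdvd2 : d ∣ p₁ ^ 2 := by rwa [sq]
    obtain ⟨i, hi, hdi⟩ := (Nat.dvd_prime_pow h₁).mp hdvd2
    rw [hdi] at hg1 hg2
    interval_cases i
    · simp at hg1
    · push_cast at hg2
      nlinarith [hg2, (by exact_mod_cast hp1 : (2:ℤ) ≤ (p₁:ℤ))]
    · push_cast at hg2
      nlinarith [hg2, (by exact_mod_cast hp1 : (2:ℤ) ≤ (p₁:ℤ))]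
  · -- p₁ < p₂
    set P : ℤ := (p₁ : ℤ) with hP
    set Q : ℤ := (p₂ : ℤ) with hQ
    have hP2 : (2:ℤ) ≤ P := by rw [hP]; exact_mod_cast hp1
    have hQ2 : (2:ℤ) ≤ Q := by rw [hQ]; exact_mod_cast hp2
    have hPQ : P < Q := by rw [hP, hQ]; exact_mod_cast hlt
    have hP0 : P ≠ 0 := by omega
    have hQ0 : Q ≠ 0 := by omega
    have hQpr : Prime Q := Nat.prime_iff_prime_int.mp h₂
    have hPpr : Prime P := Nat.prime_iff_prime_int.mp h₁
    have hQndP : ¬ Q ∣ P := fun h => by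
      have := Int.le_of_dvd (by omega) h; omega
    unfold weberS
    set F : ℤ → ℚ := fun k =>
      if 1 < Int.gcd k (P * Q) ∧ ((Int.gcd k (P * Q) : ℤ)) ^ 2 < P * Q then
        (mu (P * Q) k : ℚ) * (1 - (Int.gcd k (P * Q) : ℚ) ^ 2 / ((P * Q : ℤ) : ℚ))
      else 0 with hF
    show ∑ k ∈ Finset.Ico (2:ℤ) (P * Q), F k = (p₂:ℚ) - (p₁:ℚ)
    -- Step A: only multiples of P contribute
    have stepA : ∑ k ∈ Finset.Ico (2:ℤ) (P * Q), F k
        = ∑ k ∈ (Finset.Ico (2:ℤ) (P * Q)).filter (fun k => P ∣ k), F k := by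
      refine (Finset.sum_filter_of_ne ?_).symm
      intro k hk hne
      by_contra hnd
      apply hne
      rw [hF]
      simp only
      rw [if_neg]
      rintro ⟨hg1, hg2⟩
      set d := Int.gcd k (P * Q) with hd
      have hdvd : (d : ℤ) ∣ P * Q := Int.gcd_dvd_right _ _
      have hdk : (d : ℤ) ∣ k := Int.gcd_dvd_left _ _
      have hnd' : ¬ p₁ ∣ d := by
        intro h
        exact hnd (dvd_trans (by rw [hP]; exact_mod_cast h) hdk)
      have hdvd' : d ∣ p₁ * p₂ := by rw [hP, hQ] at hdvd; exact_mod_cast hdvd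
      have hco : Nat.Coprime d p₁ := (Nat.Prime.coprime_iff_not_dvd h₁).mpr hnd' |>.symm
      have hdp2 : d ∣ p₂ := hco.dvd_of_dvd_mul_left hdvd'
      rcases (Nat.Prime.eq_one_or_self_of_dvd h₂ d hdp2) with h | h
      · omega
      · rw [h] at hg2
        have hthis : (p₂:ℤ)^2 < P * Q := hg2
        rw [← hQ] at hthis
        nlinarith
    rw [stepA]
    -- Step B: reindex k = P * j
    have stepB : ∑ k ∈ (Finset.Ico (2:ℤ) (P * Q)).filter (fun k => P ∣ k), F k
        = ∑ j ∈ Finset.Ico (1:ℤ) Q, F (P * j) := by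
      refine Finset.sum_nbij' (fun k => k / P) (fun j => P * j) ?_ ?_ ?_ ?_ ?_
      · intro k hk
        rw [Finset.mem_filter, Finset.mem_Ico] at hk
        obtain ⟨⟨hk2, hkN⟩, m, rfl⟩ := hk
        show P * m / P ∈ Finset.Ico 1 Q
        rw [Int.mul_ediv_cancel_left _ hP0, Finset.mem_Ico]
        constructor
        · nlinarith
        · exact lt_of_mul_lt_mul_left hkN (by omega)
      · intro j hj
        rw [Finset.mem_Ico] at hj
        show P * j ∈ Finset.filter (fun k => P ∣ k) (Finset.Ico 2 (P * Q))
        rw [Finset.mem_filter, Finset.mem_Ico]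
        have e1 : P * 1 ≤ P * j := mul_le_mul_of_nonneg_left hj.1 (by omega)
        rw [mul_one] at e1
        have e2 : P * j < P * Q := mul_lt_mul_of_pos_left hj.2 (by omega)
        exact ⟨⟨by linarith, e2⟩, Dvd.intro _ rfl⟩
      · intro k hk
        rw [Finset.mem_filter] at hk
        exact Int.mul_ediv_cancel' hk.2
      · intro j hj
        exact Int.mul_ediv_cancel_left _ hP0
      · intro k hk
        rw [Finset.mem_filter] at hk
        rw [Int.mul_ediv_cancel' hk.2]
    rw [stepB]
    -- Step C: evaluate each term
    have stepC : ∑ j ∈ Finset.Ico (1:ℤ) Q, F (P * j)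
        = ∑ j ∈ Finset.Ico (1:ℤ) Q,
            (if Q ∣ P * j - 1 then (2:ℚ) else 1) * (1 - (p₁:ℚ)^2 / ((p₁:ℚ) * (p₂:ℚ))) := by
      refine Finset.sum_congr rfl ?_
      intro j hj
      rw [Finset.mem_Ico] at hj
      obtain ⟨hj1, hjQ⟩ := hj
      have hQnj : ¬ Q ∣ j := fun h => by
        have := Int.le_of_dvd (by omega) h; omega
      have hgcdjq : Int.gcd j Q = 1 := by
        rw [← Int.isCoprime_iff_gcd_eq_one, isCoprime_comm, Prime.coprime_iff_not_dvd hQpr]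
        exact hQnj
      have hgcd : Int.gcd (P * j) (P * Q) = p₁ := by
        rw [Int.gcd_mul_left, hgcdjq, mul_one, hP, Int.natAbs_natCast]
      rw [hF]
      simp only
      rw [hgcd, if_pos ⟨h₁.one_lt, by push_cast; nlinarith⟩]
      have hPn1 : ¬ P ∣ P * j - 1 := by
        intro h
        have h2 : P ∣ P * j - (P * j - 1) := dvd_sub (Dvd.intro _ rfl) h
        have h3 : P ∣ (1:ℤ) := by simpa using h2
        have := Int.le_of_dvd one_pos h3
        omega
      have hQnPj : ¬ Q ∣ P * j := fun h => by
        rcases hQpr.dvd_mul.mp h with h | h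
        · exact hQndP h
        · exact hQnj h
      by_cases hc : Q ∣ P * j - 1
      · have hm2 : mu (P * Q) (P * j) = 2 := by
          apply mu_eq_two
          · intro h
            exact ((gcd_one_iff h₁ h₂ _).mp h).2 hc
          · apply (gcd_one_iff h₁ h₂ _).mpr
            constructor
            · intro h
              have h1 : P ∣ 2 * (P * j) := ⟨2 * j, by ring⟩
              have h2 : P ∣ 2 * (P * j) - (2 * (P * j) - 1) := dvd_sub h1 h
              have h3 : P ∣ (1:ℤ) := by simpa using h2
              have := Int.le_of_dvd one_pos h3
              omega
            · intro h
              have : Q ∣ (2 * (P * j) - 1) - (P * j - 1) := dvd_sub h hc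
              have : Q ∣ P * j := by
                have h3 : (2 * (P * j) - 1) - (P * j - 1) = P * j := by ring
                rwa [h3] at this
              exact hQnPj this
        rw [hm2, if_pos hc, hP, hQ]
        push_cast
        ring
      · have hm1 : mu (P * Q) (P * j) = 1 := by
          apply mu_eq_one
          exact (gcd_one_iff h₁ h₂ _).mpr ⟨hPn1, hc⟩
        rw [hm1, if_neg hc, hP, hQ]
        push_cast
        ring
    rw [stepC]
    -- Step D: evaluate the sum
    rw [← Finset.sum_mul]
    -- unique j₀ with Q ∣ P * j₀ - 1
    have hcopr : Int.gcd P Q = 1 := by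
      rw [hP, hQ, Int.gcd_natCast_natCast]
      exact (Nat.coprime_primes h₁ h₂).mpr (Nat.ne_of_lt hlt)
    have hbez : (1:ℤ) = P * Int.gcdA P Q + Q * Int.gcdB P Q := by
      have := Int.gcd_eq_gcd_ab P Q
      rw [hcopr] at this
      exact_mod_cast this
    set a := Int.gcdA P Q with ha
    set j₀ := a % Q with hj₀
    have hj₀dvd : Q ∣ P * j₀ - 1 := by
      refine ⟨-(Int.gcdB P Q) - P * (a / Q), ?_⟩
      rw [hj₀, Int.emod_def]
      linear_combination -hbez
    have hj₀mem : j₀ ∈ Finset.Ico (1:ℤ) Q := by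
      rw [Finset.mem_Ico]
      have h0 : 0 ≤ j₀ := Int.emod_nonneg a hQ0
      have h1 : j₀ < Q := Int.emod_lt_of_pos a (by omega)
      refine ⟨?_, h1⟩
      rcases eq_or_lt_of_le h0 with h | h
      · exfalso
        rw [← h] at hj₀dvd
        simp only [mul_zero, zero_sub] at hj₀dvd
        have : Q ∣ (1:ℤ) := (dvd_neg).mp hj₀dvd
        have := Int.le_of_dvd one_pos this
        omega
      · omega
    have hsum_ind : ∑ j ∈ Finset.Ico (1:ℤ) Q, (if Q ∣ P * j - 1 then (1:ℚ) else 0) = 1 := by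
      rw [Finset.sum_eq_single_of_mem j₀ hj₀mem]
      · rw [if_pos hj₀dvd]
      · intro b hb hbne
        rw [if_neg]
        intro hd
        have hdvd : Q ∣ P * (b - j₀) := by
          have := dvd_sub hd hj₀dvd
          have h3 : (P * b - 1) - (P * j₀ - 1) = P * (b - j₀) := by ring
          rwa [h3] at this
        have : Q ∣ b - j₀ := by
          rcases hQpr.dvd_mul.mp hdvd with h | h
          · exact absurd h hQndP
          · exact h
        rw [Finset.mem_Ico] at hb hj₀mem
        have habs : |b - j₀| < Q := abs_lt.mpr ⟨by omega, by omega⟩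
        have hne0 : b - j₀ ≠ 0 := fun h => hbne (by omega)
        have := Int.le_of_dvd (abs_pos.mpr hne0) ((dvd_abs _ _).mpr this)
        omega
    have hsplit : ∑ j ∈ Finset.Ico (1:ℤ) Q, (if Q ∣ P * j - 1 then (2:ℚ) else 1)
        = ∑ j ∈ Finset.Ico (1:ℤ) Q, ((1:ℚ) + if Q ∣ P * j - 1 then (1:ℚ) else 0) := by
      refine Finset.sum_congr rfl fun j _ => ?_
      split_ifs <;> norm_num
    rw [hsplit, Finset.sum_add_distrib, hsum_ind, Finset.sum_const]
    have hcard : ((Finset.Ico (1:ℤ) Q).card : ℚ) = (p₂:ℚ) - 1 := by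
      rw [Int.card_Ico, hQ, show ((p₂:ℤ) - 1) = ((p₂ - 1 : ℕ) : ℤ) by push_cast; omega,
        Int.toNat_natCast]
      push_cast [Nat.cast_sub (by omega : 1 ≤ p₂)]
      ring
    rw [nsmul_eq_mul, mul_one, hcard]
    have h1q : (p₁:ℚ) ≠ 0 := Nat.cast_ne_zero.mpr h₁.pos.ne'
    have h2q : (p₂:ℚ) ≠ 0 := Nat.cast_ne_zero.mpr h₂.pos.ne'
    field_simp
    ring
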